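/- Let φ : [a,b] → ℝ be C² with |φ″(t)| ≥ ρ > 0 for all t ∈ [a,b], and let η : [a,b] → ℂ satisfy |η(t)| ≤ 1 and ∫ₐᵇ |η′(t)| dt ≤ M. Then |∫ₐᵇ η(t) e^{iμφ(t)} dt| ≤ C(1 + M)(μρ)^{−1/2} for all μ > 0, where C is an absolute constant. -/

import Mathlib

open Real Complex intervalIntegral Set
open MeasureTheory

lemma vdc_key1 {O : Set ℝ} (hO : IsOpen O) {u v lam : ℝ} (huv : u ≤ v)
    (hsub : Icc u v ⊆ O) (hlam : 0 < lam)
    {ψ g g' : ℝ → ℝ}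
    (hg : ∀ t ∈ O, HasDerivAt ψ (g t) t)
    (hg' : ∀ t ∈ O, HasDerivAt g (g' t) t)
    (hg'c : ContinuousOn g' O)
    (hg'nn : ∀ t ∈ Icc u v, 0 ≤ g' t)
    (hsign : (∀ t ∈ Icc u v, lam ≤ g t) ∨ (∀ t ∈ Icc u v, g t ≤ -lam)) :
    ‖∫ t in u..v, Complex.exp (Complex.I * ψ t)‖ ≤ 3 / lam := by
  have hI : Set.uIcc u v = Icc u v := uIcc_of_le huv
  have habs : ∀ t ∈ Icc u v, lam ≤ |g t| := by
    intro t ht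
    rcases hsign with h | h
    · exact le_trans (h t ht) (le_abs_self _)
    · calc lam ≤ -(g t) := by linarith [h t ht]
        _ ≤ |g t| := neg_le_abs _
  have hne : ∀ t ∈ Icc u v, g t ≠ 0 := by
    intro t ht h0
    have := habs t ht; rw [h0] at this; simp at this; linarith
  have hneC : ∀ t ∈ Icc u v, (Complex.I * (g t : ℂ)) ≠ 0 := by
    intro t ht
    exact mul_ne_zero Complex.I_ne_zero (by exact_mod_cast hne t ht)
  set E : ℝ → ℂ := fun t => Complex.exp (Complex.I * ψ t) with hE_def
  set E' : ℝ → ℂ := fun t => Complex.I * g t * E t with hE'_def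
  set c : ℝ → ℂ := fun t => (Complex.I * g t)⁻¹ with hc_def
  set c' : ℝ → ℂ := fun t => -(Complex.I * g' t) / (Complex.I * g t) ^ 2 with hc'_def
  -- derivatives
  have hψc : ContinuousOn ψ O := fun t ht => (hg t ht).continuousAt.continuousWithinAt
  have hgc : ContinuousOn g O := fun t ht => (hg' t ht).continuousAt.continuousWithinAt
  have hEd : ∀ t ∈ Set.uIcc u v, HasDerivAt E (E' t) t := by
    intro t ht
    rw [hI] at ht
    have h1 : HasDerivAt (fun s : ℝ => Complex.I * (ψ s : ℂ)) (Complex.I * g t) t :=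
      ((hg t (hsub ht)).ofReal_comp).const_mul Complex.I
    have := h1.cexp
    simpa [hE_def, hE'_def, mul_comm] using this
  have hcd : ∀ t ∈ Set.uIcc u v, HasDerivAt c (c' t) t := by
    intro t ht
    rw [hI] at ht
    have h1 : HasDerivAt (fun s : ℝ => Complex.I * (g s : ℂ)) (Complex.I * g' t) t :=
      ((hg' t (hsub ht)).ofReal_comp).const_mul Complex.I
    have h2 := (hasDerivAt_const t (1:ℂ)).div h1 (hneC t ht)
    have hc_eq : c = (fun _ => (1:ℂ)) / fun s => Complex.I * (g s : ℂ) := by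
      funext s; simp only [hc_def, Pi.div_apply, one_div]
    rw [hc_eq]
    exact h2.congr_deriv (by simp only [hc'_def]; ring)
  -- continuity of integrands on Icc u v
  have hgC : ContinuousOn (fun t => (g t : ℂ)) (Icc u v) :=
    Complex.continuous_ofReal.comp_continuousOn (hgc.mono hsub)
  have hg'C : ContinuousOn (fun t => (g' t : ℂ)) (Icc u v) :=
    Complex.continuous_ofReal.comp_continuousOn (hg'c.mono hsub)
  have hEc : ContinuousOn E (Icc u v) :=
    Complex.continuous_exp.comp_continuousOn
      (continuous_const.continuousOn.mul
        (Complex.continuous_ofReal.comp_continuousOn (hψc.mono hsub)))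
  have hE'c : ContinuousOn E' (Icc u v) :=
    ((continuous_const.continuousOn.mul hgC).mul hEc)
  have hc'c : ContinuousOn c' (Icc u v) := by
    apply ContinuousOn.div
    · exact (continuous_const.continuousOn.mul hg'C).neg
    · exact (continuous_const.continuousOn.mul hgC).pow 2
    · intro t ht
      exact pow_ne_zero _ (hneC t ht)
  have hintE' : IntervalIntegrable E' volume u v := by
    apply ContinuousOn.intervalIntegrable; rwa [hI]
  have hintc' : IntervalIntegrable c' volume u v := by
    apply ContinuousOn.intervalIntegrable; rwa [hI]
  -- IBP
  have hibp := intervalIntegral.integral_mul_deriv_eq_deriv_mul hcd hEd hintc' hintE'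
  have hcong : ∫ t in u..v, E t = ∫ t in u..v, c t * E' t := by
    apply intervalIntegral.integral_congr
    intro t ht
    rw [hI] at ht
    simp only [hc_def, hE'_def]
    rw [← mul_assoc, inv_mul_cancel₀ (hneC t ht), one_mul]
  rw [hcong, hibp]
  -- norms
  have hcnorm : ∀ t ∈ Icc u v, ‖c t‖ ≤ 1 / lam := by
    intro t ht
    simp only [hc_def, norm_inv, norm_mul, Complex.norm_I, one_mul, Complex.norm_real,
      Real.norm_eq_abs]
    rw [one_div]
    exact inv_anti₀ hlam (habs t ht)
  have hEnorm : ∀ t : ℝ, ‖E t‖ = 1 := by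
    intro t
    simp [hE_def, Complex.norm_exp]
  have hc'norm : ∀ t ∈ Icc u v, ‖c' t‖ = g' t / (g t) ^ 2 := by
    intro t ht
    simp only [hc'_def, norm_div, norm_neg, norm_mul, Complex.norm_I, one_mul, norm_pow,
      Complex.norm_real, Real.norm_eq_abs]
    rw [_root_.abs_of_nonneg (hg'nn t ht), _root_.sq_abs]
  -- the integral of ‖c'‖
  have hFTC : ∫ t in u..v, g' t / (g t) ^ 2 = (-(g v)⁻¹) - (-(g u)⁻¹) := by
    apply intervalIntegral.integral_eq_sub_of_hasDerivAt
    · intro t ht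
      rw [hI] at ht
      have h1 := ((hg' t (hsub ht)).inv (hne t ht)).neg
      convert h1 using 1
      · rfl
      · ring
    · apply ContinuousOn.intervalIntegrable
      rw [hI]
      apply ContinuousOn.div ((hg'c.mono hsub))
      · exact ((hgc.mono hsub).pow 2)
      · intro t ht; exact pow_ne_zero _ (hne t ht)
  have hIc' : ‖∫ t in u..v, c' t * E t‖ ≤ 1 / lam := by
    have h1 : ‖∫ t in u..v, c' t * E t‖ ≤ |∫ t in u..v, g' t / (g t) ^ 2| := by
      apply intervalIntegral.norm_integral_le_abs_of_norm_le
      · filter_upwards [MeasureTheory.ae_restrict_mem measurableSet_uIoc] with t ht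
        have ht' : t ∈ Icc u v := by
          rw [Set.uIoc_of_le huv] at ht; exact ⟨le_of_lt ht.1, ht.2⟩
        rw [norm_mul, hEnorm t, mul_one, hc'norm t ht']
      · apply ContinuousOn.intervalIntegrable
        rw [hI]
        apply ContinuousOn.div ((hg'c.mono hsub))
        · exact ((hgc.mono hsub).pow 2)
        · intro t ht; exact pow_ne_zero _ (hne t ht)
    rw [hFTC] at h1
    refine h1.trans ?_
    have hu' : u ∈ Icc u v := ⟨le_refl u, huv⟩
    have hv' : v ∈ Icc u v := ⟨huv, le_refl v⟩
    rw [abs_le]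
    constructor
    · rcases hsign with h | h
      · have h3 : (g v)⁻¹ ≤ 1 / lam := by rw [one_div]; exact inv_anti₀ hlam (h v hv')
        have h4 : 0 < (g u)⁻¹ := inv_pos.mpr (lt_of_lt_of_le hlam (h u hu'))
        linarith
      · have h3 : (g u)⁻¹ < 0 := inv_neg''.mpr (lt_of_le_of_lt (h u hu') (by linarith))
        have h5 : (g v)⁻¹ < 0 := inv_neg''.mpr (lt_of_le_of_lt (h v hv') (by linarith))
        have h4 : -(g u)⁻¹ ≤ 1 / lam := by
          rw [← inv_neg, one_div]
          exact inv_anti₀ hlam (by linarith [h u hu'])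
        linarith
    · rcases hsign with h | h
      · have h3 : (g u)⁻¹ ≤ 1 / lam := by rw [one_div]; exact inv_anti₀ hlam (h u hu')
        have h4 : 0 < (g v)⁻¹ := inv_pos.mpr (lt_of_lt_of_le hlam (h v hv'))
        linarith
      · have h3 : (g v)⁻¹ < 0 := inv_neg''.mpr (lt_of_le_of_lt (h v hv') (by linarith))
        have h5 : (g u)⁻¹ < 0 := inv_neg''.mpr (lt_of_le_of_lt (h u hu') (by linarith))
        have h4 : -(g v)⁻¹ ≤ 1 / lam := by
          rw [← inv_neg, one_div]
          exact inv_anti₀ hlam (by linarith [h v hv'])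
        linarith
  -- final combination
  have hcu := hcnorm u ⟨le_refl u, huv⟩
  have hcv := hcnorm v ⟨huv, le_refl v⟩
  calc ‖c v * E v - c u * E u - ∫ t in u..v, c' t * E t‖
      ≤ ‖c v * E v - c u * E u‖ + ‖∫ t in u..v, c' t * E t‖ := norm_sub_le _ _
    _ ≤ (‖c v * E v‖ + ‖c u * E u‖) + ‖∫ t in u..v, c' t * E t‖ := by
        gcongr; exact norm_sub_le _ _
    _ ≤ (1 / lam + 1 / lam) + 1 / lam := by
        have e1 : ‖c v * E v‖ ≤ 1 / lam := by rw [norm_mul, hEnorm, mul_one]; exact hcv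
        have e2 : ‖c u * E u‖ ≤ 1 / lam := by rw [norm_mul, hEnorm, mul_one]; exact hcu
        linarith [hIc']
    _ = 3 / lam := by ring

lemma vdc_conj_int {f : ℝ → ℂ} {a b : ℝ} :
    (∫ t in a..b, (starRingEnd ℂ) (f t)) = (starRingEnd ℂ) (∫ t in a..b, f t) := by
  rw [intervalIntegral, intervalIntegral, integral_conj, integral_conj, map_sub]

lemma vdc_left {O : Set ℝ} (hO : IsOpen O) {u v r : ℝ} (huv : u ≤ v)
    (hsub : Icc u v ⊆ O) (hr : 0 < r)
    {ψ g g' : ℝ → ℝ}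
    (hg : ∀ t ∈ O, HasDerivAt ψ (g t) t)
    (hg' : ∀ t ∈ O, HasDerivAt g (g' t) t)
    (hg'c : ContinuousOn g' O)
    (hlow : ∀ t ∈ Icc u v, r ≤ g' t)
    (h0 : 0 ≤ g u) :
    ‖∫ t in u..v, Complex.exp (Complex.I * ψ t)‖ ≤ 4 / Real.sqrt r := by
  have hsq : 0 < Real.sqrt r := Real.sqrt_pos.mpr hr
  set δ : ℝ := (Real.sqrt r)⁻¹ with hδ_def
  have hδ : 0 < δ := inv_pos.mpr hsq
  have hrδ : r * δ = Real.sqrt r := by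
    rw [hδ_def, ← Real.mul_self_sqrt hr.le]
    field_simp
    rw [Real.sqrt_sq hsq.le]
  -- quantitative growth
  have hψc : ContinuousOn ψ O := fun t ht => (hg t ht).continuousAt.continuousWithinAt
  have hgc : ContinuousOn g O := fun t ht => (hg' t ht).continuousAt.continuousWithinAt
  have hEc : ContinuousOn (fun t => Complex.exp (Complex.I * ψ t)) O :=
    Complex.continuous_exp.comp_continuousOn
      (continuous_const.continuousOn.mul
        (Complex.continuous_ofReal.comp_continuousOn hψc))
  have hquant : ∀ s t, s ∈ Icc u v → t ∈ Icc u v → s ≤ t → g s + r * (t - s) ≤ g t := by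
    intro s t hs ht hst
    have hIcc : Icc s t ⊆ Icc u v := Icc_subset_Icc hs.1 ht.2
    have hftc : ∫ x in s..t, g' x = g t - g s := by
      apply intervalIntegral.integral_eq_sub_of_hasDerivAt
      · intro x hx
        rw [uIcc_of_le hst] at hx
        exact hg' x (hsub (hIcc hx))
      · apply ContinuousOn.intervalIntegrable
        rw [uIcc_of_le hst]
        exact hg'c.mono (fun x hx => hsub (hIcc hx))
    have hmono : (∫ x in s..t, r) ≤ ∫ x in s..t, g' x := by
      apply intervalIntegral.integral_mono_on hst intervalIntegrable_const
      · apply ContinuousOn.intervalIntegrable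
        rw [uIcc_of_le hst]
        exact hg'c.mono (fun x hx => hsub (hIcc hx))
      · intro x hx; exact hlow x (hIcc hx)
    rw [hftc] at hmono
    rw [intervalIntegral.integral_const, smul_eq_mul] at hmono
    nlinarith
  set m : ℝ := min (u + δ) v with hm_def
  have hum : u ≤ m := le_min (by linarith) huv
  have hmv : m ≤ v := min_le_right _ _
  have hintval : ∀ s t : ℝ, s ∈ Icc u v → t ∈ Icc u v →
      IntervalIntegrable (fun x => Complex.exp (Complex.I * ψ x)) volume s t := by
    intro s t hs ht
    apply ContinuousOn.intervalIntegrable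
    apply hEc.mono
    intro x hx
    apply hsub
    rcases le_total s t with h | h
    · rw [uIcc_of_le h] at hx; exact ⟨le_trans hs.1 hx.1, le_trans hx.2 ht.2⟩
    · rw [uIcc_of_ge h] at hx; exact ⟨le_trans ht.1 hx.1, le_trans hx.2 hs.2⟩
  have hmem_m : m ∈ Icc u v := ⟨hum, hmv⟩
  have hsplit : (∫ t in u..v, Complex.exp (Complex.I * ψ t))
      = (∫ t in u..m, Complex.exp (Complex.I * ψ t))
        + ∫ t in m..v, Complex.exp (Complex.I * ψ t) :=
    (intervalIntegral.integral_add_adjacent_intervals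
      (hintval u m (left_mem_Icc.mpr huv) hmem_m)
      (hintval m v hmem_m (right_mem_Icc.mpr huv))).symm
  have hb1 : ‖∫ t in u..m, Complex.exp (Complex.I * ψ t)‖ ≤ δ := by
    have h1 : ‖∫ t in u..m, Complex.exp (Complex.I * ψ t)‖ ≤ 1 * |m - u| := by
      apply intervalIntegral.norm_integral_le_of_norm_le_const
      intro x _
      simp [Complex.norm_exp]
    rw [_root_.abs_of_nonneg (by linarith)] at h1
    have : m - u ≤ δ := by
      have := min_le_left (u + δ) v
      simp only [hm_def]
      linarith [min_le_left (u + δ) v]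
    linarith
  have hb2 : ‖∫ t in m..v, Complex.exp (Complex.I * ψ t)‖ ≤ 3 / Real.sqrt r := by
    rcases le_or_gt v (u + δ) with hc | hc
    · have hmv' : m = v := min_eq_right hc
      rw [hmv', intervalIntegral.integral_same]
      simp
      positivity
    · have hm' : m = u + δ := min_eq_left (by linarith)
      have h3 := vdc_key1 hO hmv (fun x hx => hsub ⟨le_trans hum hx.1, hx.2⟩) hsq
        hg hg' hg'c
        (fun t ht => le_trans hr.le (hlow t ⟨le_trans hum ht.1, ht.2⟩))
        (Or.inl ?_)
      · exact h3
      · intro t ht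
        have ht' : t ∈ Icc u v := ⟨le_trans hum ht.1, ht.2⟩
        have hq := hquant u t (left_mem_Icc.mpr huv) ht' (le_trans hum ht.1)
        have : δ ≤ t - u := by rw [hm'] at ht; linarith [ht.1]
        nlinarith [hlow t ht']
  rw [hsplit]
  calc ‖(∫ t in u..m, Complex.exp (Complex.I * ψ t))
        + ∫ t in m..v, Complex.exp (Complex.I * ψ t)‖
      ≤ ‖∫ t in u..m, Complex.exp (Complex.I * ψ t)‖
        + ‖∫ t in m..v, Complex.exp (Complex.I * ψ t)‖ := norm_add_le _ _
    _ ≤ δ + 3 / Real.sqrt r := add_le_add hb1 hb2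
    _ = 4 / Real.sqrt r := by rw [hδ_def]; field_simp; ring

lemma vdc_right {O : Set ℝ} (hO : IsOpen O) {u v r : ℝ} (huv : u ≤ v)
    (hsub : Icc u v ⊆ O) (hr : 0 < r)
    {ψ g g' : ℝ → ℝ}
    (hg : ∀ t ∈ O, HasDerivAt ψ (g t) t)
    (hg' : ∀ t ∈ O, HasDerivAt g (g' t) t)
    (hg'c : ContinuousOn g' O)
    (hlow : ∀ t ∈ Icc u v, r ≤ g' t)
    (h0 : g v ≤ 0) :
    ‖∫ t in u..v, Complex.exp (Complex.I * ψ t)‖ ≤ 4 / Real.sqrt r := by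
  have hsq : 0 < Real.sqrt r := Real.sqrt_pos.mpr hr
  set δ : ℝ := (Real.sqrt r)⁻¹ with hδ_def
  have hδ : 0 < δ := inv_pos.mpr hsq
  have hrδ : r * δ = Real.sqrt r := by
    rw [hδ_def, ← Real.mul_self_sqrt hr.le]
    field_simp
    rw [Real.sqrt_sq hsq.le]
  have hψc : ContinuousOn ψ O := fun t ht => (hg t ht).continuousAt.continuousWithinAt
  have hgc : ContinuousOn g O := fun t ht => (hg' t ht).continuousAt.continuousWithinAt
  have hEc : ContinuousOn (fun t => Complex.exp (Complex.I * ψ t)) O :=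
    Complex.continuous_exp.comp_continuousOn
      (continuous_const.continuousOn.mul
        (Complex.continuous_ofReal.comp_continuousOn hψc))
  have hquant : ∀ s t, s ∈ Icc u v → t ∈ Icc u v → s ≤ t → g s + r * (t - s) ≤ g t := by
    intro s t hs ht hst
    have hIcc : Icc s t ⊆ Icc u v := Icc_subset_Icc hs.1 ht.2
    have hftc : ∫ x in s..t, g' x = g t - g s := by
      apply intervalIntegral.integral_eq_sub_of_hasDerivAt
      · intro x hx
        rw [uIcc_of_le hst] at hx
        exact hg' x (hsub (hIcc hx))
      · apply ContinuousOn.intervalIntegrable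
        rw [uIcc_of_le hst]
        exact hg'c.mono (fun x hx => hsub (hIcc hx))
    have hmono : (∫ x in s..t, r) ≤ ∫ x in s..t, g' x := by
      apply intervalIntegral.integral_mono_on hst intervalIntegrable_const
      · apply ContinuousOn.intervalIntegrable
        rw [uIcc_of_le hst]
        exact hg'c.mono (fun x hx => hsub (hIcc hx))
      · intro x hx; exact hlow x (hIcc hx)
    rw [hftc] at hmono
    rw [intervalIntegral.integral_const, smul_eq_mul] at hmono
    nlinarith
  set m : ℝ := max (v - δ) u with hm_def
  have hum : u ≤ m := le_max_right _ _
  have hmv : m ≤ v := max_le (by linarith) huv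
  have hintval : ∀ s t : ℝ, s ∈ Icc u v → t ∈ Icc u v →
      IntervalIntegrable (fun x => Complex.exp (Complex.I * ψ x)) volume s t := by
    intro s t hs ht
    apply ContinuousOn.intervalIntegrable
    apply hEc.mono
    intro x hx
    apply hsub
    rcases le_total s t with h | h
    · rw [uIcc_of_le h] at hx; exact ⟨le_trans hs.1 hx.1, le_trans hx.2 ht.2⟩
    · rw [uIcc_of_ge h] at hx; exact ⟨le_trans ht.1 hx.1, le_trans hx.2 hs.2⟩
  have hmem_m : m ∈ Icc u v := ⟨hum, hmv⟩
  have hsplit : (∫ t in u..v, Complex.exp (Complex.I * ψ t))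
      = (∫ t in u..m, Complex.exp (Complex.I * ψ t))
        + ∫ t in m..v, Complex.exp (Complex.I * ψ t) :=
    (intervalIntegral.integral_add_adjacent_intervals
      (hintval u m (left_mem_Icc.mpr huv) hmem_m)
      (hintval m v hmem_m (right_mem_Icc.mpr huv))).symm
  have hb2 : ‖∫ t in m..v, Complex.exp (Complex.I * ψ t)‖ ≤ δ := by
    have h1 : ‖∫ t in m..v, Complex.exp (Complex.I * ψ t)‖ ≤ 1 * |v - m| := by
      apply intervalIntegral.norm_integral_le_of_norm_le_const
      intro x _
      simp [Complex.norm_exp]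
    rw [_root_.abs_of_nonneg (by linarith)] at h1
    have : v - m ≤ δ := by
      simp only [hm_def]
      linarith [le_max_left (v - δ) u]
    linarith
  have hb1 : ‖∫ t in u..m, Complex.exp (Complex.I * ψ t)‖ ≤ 3 / Real.sqrt r := by
    rcases le_or_gt (v - δ) u with hc | hc
    · have hmv' : m = u := max_eq_right hc
      rw [hmv', intervalIntegral.integral_same]
      simp
      positivity
    · have hm' : m = v - δ := max_eq_left (by linarith)
      have h3 := vdc_key1 hO hum (fun x hx => hsub ⟨hx.1, le_trans hx.2 hmv⟩) hsq
        hg hg' hg'c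
        (fun t ht => le_trans hr.le (hlow t ⟨ht.1, le_trans ht.2 hmv⟩))
        (Or.inr ?_)
      · exact h3
      · intro t ht
        have ht' : t ∈ Icc u v := ⟨ht.1, le_trans ht.2 hmv⟩
        have hq := hquant t v ht' (right_mem_Icc.mpr huv) (le_trans ht.2 hmv)
        have : δ ≤ v - t := by rw [hm'] at ht; linarith [ht.2]
        nlinarith [hlow t ht']
  rw [hsplit]
  calc ‖(∫ t in u..m, Complex.exp (Complex.I * ψ t))
        + ∫ t in m..v, Complex.exp (Complex.I * ψ t)‖
      ≤ ‖∫ t in u..m, Complex.exp (Complex.I * ψ t)‖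
        + ‖∫ t in m..v, Complex.exp (Complex.I * ψ t)‖ := norm_add_le _ _
    _ ≤ 3 / Real.sqrt r + δ := add_le_add hb1 hb2
    _ = 4 / Real.sqrt r := by rw [hδ_def]; field_simp; ring

lemma vdc_key2pos {O : Set ℝ} (hO : IsOpen O) {u v r : ℝ} (huv : u ≤ v)
    (hsub : Icc u v ⊆ O) (hr : 0 < r)
    {ψ g g' : ℝ → ℝ}
    (hg : ∀ t ∈ O, HasDerivAt ψ (g t) t)
    (hg' : ∀ t ∈ O, HasDerivAt g (g' t) t)
    (hg'c : ContinuousOn g' O)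
    (hlow : ∀ t ∈ Icc u v, r ≤ g' t) :
    ‖∫ t in u..v, Complex.exp (Complex.I * ψ t)‖ ≤ 8 / Real.sqrt r := by
  have hsq : 0 < Real.sqrt r := Real.sqrt_pos.mpr hr
  have h48 : (4 : ℝ) / Real.sqrt r ≤ 8 / Real.sqrt r := by
    gcongr <;> norm_num
  have hψc : ContinuousOn ψ O := fun t ht => (hg t ht).continuousAt.continuousWithinAt
  have hgc : ContinuousOn g O := fun t ht => (hg' t ht).continuousAt.continuousWithinAt
  have hEc : ContinuousOn (fun t => Complex.exp (Complex.I * ψ t)) O :=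
    Complex.continuous_exp.comp_continuousOn
      (continuous_const.continuousOn.mul
        (Complex.continuous_ofReal.comp_continuousOn hψc))
  rcases le_or_gt 0 (g u) with h0 | h0
  · exact le_trans (vdc_left hO huv hsub hr hg hg' hg'c hlow h0) h48
  rcases le_or_gt (g v) 0 with h1 | h1
  · exact le_trans (vdc_right hO huv hsub hr hg hg' hg'c hlow h1) h48
  -- IVT
  have hgcont : ContinuousOn g (Icc u v) := hgc.mono hsub
  have h0mem : (0:ℝ) ∈ Icc (g u) (g v) := ⟨h0.le, h1.le⟩
  obtain ⟨c, hc, hgc0⟩ := intermediate_value_Icc huv hgcont h0mem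
  have hsubl : Icc u c ⊆ O := fun x hx => hsub ⟨hx.1, le_trans hx.2 hc.2⟩
  have hsubr : Icc c v ⊆ O := fun x hx => hsub ⟨le_trans hc.1 hx.1, hx.2⟩
  have hbl := vdc_right hO hc.1 hsubl hr hg hg' hg'c
    (fun t ht => hlow t ⟨ht.1, le_trans ht.2 hc.2⟩) (le_of_eq hgc0)
  have hbr := vdc_left hO hc.2 hsubr hr hg hg' hg'c
    (fun t ht => hlow t ⟨le_trans hc.1 ht.1, ht.2⟩) (ge_of_eq hgc0)
  have hintval : ∀ s t : ℝ, s ∈ Icc u v → t ∈ Icc u v →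
      IntervalIntegrable (fun x => Complex.exp (Complex.I * ψ x)) volume s t := by
    intro s t hs ht
    apply ContinuousOn.intervalIntegrable
    apply hEc.mono
    intro x hx
    apply hsub
    rcases le_total s t with h | h
    · rw [uIcc_of_le h] at hx; exact ⟨le_trans hs.1 hx.1, le_trans hx.2 ht.2⟩
    · rw [uIcc_of_ge h] at hx; exact ⟨le_trans ht.1 hx.1, le_trans hx.2 hs.2⟩
  have hsplit : (∫ t in u..v, Complex.exp (Complex.I * ψ t))
      = (∫ t in u..c, Complex.exp (Complex.I * ψ t))
        + ∫ t in c..v, Complex.exp (Complex.I * ψ t) :=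
    (intervalIntegral.integral_add_adjacent_intervals
      (hintval u c (left_mem_Icc.mpr huv) hc)
      (hintval c v hc (right_mem_Icc.mpr huv))).symm
  rw [hsplit]
  calc ‖(∫ t in u..c, Complex.exp (Complex.I * ψ t))
        + ∫ t in c..v, Complex.exp (Complex.I * ψ t)‖
      ≤ ‖∫ t in u..c, Complex.exp (Complex.I * ψ t)‖
        + ‖∫ t in c..v, Complex.exp (Complex.I * ψ t)‖ := norm_add_le _ _
    _ ≤ 4 / Real.sqrt r + 4 / Real.sqrt r := add_le_add hbl hbr
    _ = 8 / Real.sqrt r := by ring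

lemma vdc_key2 {O : Set ℝ} (hO : IsOpen O) {u v r : ℝ} (huv : u ≤ v)
    (hsub : Icc u v ⊆ O) (hr : 0 < r)
    {ψ g g' : ℝ → ℝ}
    (hg : ∀ t ∈ O, HasDerivAt ψ (g t) t)
    (hg' : ∀ t ∈ O, HasDerivAt g (g' t) t)
    (hg'c : ContinuousOn g' O)
    (hsign : (∀ t ∈ Icc u v, r ≤ g' t) ∨ (∀ t ∈ Icc u v, g' t ≤ -r)) :
    ‖∫ t in u..v, Complex.exp (Complex.I * ψ t)‖ ≤ 8 / Real.sqrt r := by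
  rcases hsign with h | h
  · exact vdc_key2pos hO huv hsub hr hg hg' hg'c h
  · have hconj : (∫ t in u..v, Complex.exp (Complex.I * ((-ψ t : ℝ))))
        = (starRingEnd ℂ) (∫ t in u..v, Complex.exp (Complex.I * ψ t)) := by
      rw [← vdc_conj_int]
      apply intervalIntegral.integral_congr
      intro t _
      show Complex.exp (Complex.I * ((-ψ t : ℝ)))
          = (starRingEnd ℂ) (Complex.exp (Complex.I * (ψ t : ℝ)))
      rw [← Complex.exp_conj]
      congr 1
      simp [Complex.conj_I]
    have h2 : ‖∫ t in u..v, Complex.exp (Complex.I * ((-ψ t : ℝ)))‖ ≤ 8 / Real.sqrt r :=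
      vdc_key2pos hO huv hsub hr
        (ψ := fun t => -ψ t) (g := fun t => -g t) (g' := fun t => -g' t)
        (fun t ht => (hg t ht).neg)
        (fun t ht => (hg' t ht).neg)
        hg'c.neg
        (fun t ht => by simpa using neg_le_neg (h t ht))
    rw [hconj] at h2
    rwa [RCLike.norm_conj] at h2

lemma vdc_core {O : Set ℝ} (hO : IsOpen O) {u v r M' : ℝ} (huv : u ≤ v)
    (hsub : Icc u v ⊆ O) (hr : 0 < r)
    {ψ g g' : ℝ → ℝ} {η η' : ℝ → ℂ}
    (hg : ∀ t ∈ O, HasDerivAt ψ (g t) t)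
    (hg' : ∀ t ∈ O, HasDerivAt g (g' t) t)
    (hg'c : ContinuousOn g' O)
    (hsign : (∀ t ∈ Icc u v, r ≤ g' t) ∨ (∀ t ∈ Icc u v, g' t ≤ -r))
    (hη : ∀ t ∈ O, HasDerivAt η (η' t) t)
    (hη'c : ContinuousOn η' O)
    (hηb : ∀ t ∈ Icc u v, ‖η t‖ ≤ 1)
    (hηint : (∫ t in u..v, ‖η' t‖) ≤ M') :
    ‖∫ t in u..v, η t * Complex.exp (Complex.I * ψ t)‖
      ≤ (1 + M') * (8 / Real.sqrt r) := by
  have hsq : 0 < Real.sqrt r := Real.sqrt_pos.mpr hr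
  have hB : 0 ≤ 8 / Real.sqrt r := by positivity
  set E : ℝ → ℂ := fun t => Complex.exp (Complex.I * ψ t) with hE_def
  have hψc : ContinuousOn ψ O := fun t ht => (hg t ht).continuousAt.continuousWithinAt
  have hEc : ContinuousOn E O :=
    Complex.continuous_exp.comp_continuousOn
      (continuous_const.continuousOn.mul
        (Complex.continuous_ofReal.comp_continuousOn hψc))
  have hintval : ∀ s t : ℝ, s ∈ Icc u v → t ∈ Icc u v →
      IntervalIntegrable E volume s t := by
    intro s t hs ht
    apply ContinuousOn.intervalIntegrable
    apply hEc.mono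
    intro x hx
    apply hsub
    rcases le_total s t with h | h
    · rw [uIcc_of_le h] at hx; exact ⟨le_trans hs.1 hx.1, le_trans hx.2 ht.2⟩
    · rw [uIcc_of_ge h] at hx; exact ⟨le_trans ht.1 hx.1, le_trans hx.2 hs.2⟩
  set F : ℝ → ℂ := fun x => ∫ t in u..x, E t with hF_def
  have hFd : ∀ x ∈ Set.uIcc u v, HasDerivAt F (E x) x := by
    intro x hx
    rw [uIcc_of_le huv] at hx
    have hxO : x ∈ O := hsub hx
    exact intervalIntegral.integral_hasDerivAt_right
      (hintval u x (left_mem_Icc.mpr huv) hx)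
      (ContinuousOn.stronglyMeasurableAtFilter hO hEc x hxO)
      (hEc.continuousAt (hO.mem_nhds hxO))
  have hFb : ∀ x ∈ Icc u v, ‖F x‖ ≤ 8 / Real.sqrt r := by
    intro x hx
    apply vdc_key2 hO hx.1 (fun y hy => hsub ⟨hy.1, le_trans hy.2 hx.2⟩) hr hg hg' hg'c
    rcases hsign with h | h
    · exact Or.inl (fun t ht => h t ⟨ht.1, le_trans ht.2 hx.2⟩)
    · exact Or.inr (fun t ht => h t ⟨ht.1, le_trans ht.2 hx.2⟩)
  have hηd : ∀ x ∈ Set.uIcc u v, HasDerivAt η (η' x) x := by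
    intro x hx; rw [uIcc_of_le huv] at hx; exact hη x (hsub hx)
  have hη'int : IntervalIntegrable η' volume u v := by
    apply ContinuousOn.intervalIntegrable
    rw [uIcc_of_le huv]
    exact hη'c.mono hsub
  have hibp := intervalIntegral.integral_mul_deriv_eq_deriv_mul hηd hFd hη'int
    (hintval u v (left_mem_Icc.mpr huv) (right_mem_Icc.mpr huv))
  have hFu : F u = 0 := intervalIntegral.integral_same
  rw [hFu, mul_zero, sub_zero] at hibp
  rw [hibp]
  have hb1 : ‖η v * F v‖ ≤ 8 / Real.sqrt r := by
    rw [norm_mul]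
    calc ‖η v‖ * ‖F v‖ ≤ 1 * (8 / Real.sqrt r) := by
          apply mul_le_mul (hηb v (right_mem_Icc.mpr huv))
            (hFb v (right_mem_Icc.mpr huv)) (norm_nonneg _) zero_le_one
      _ = 8 / Real.sqrt r := one_mul _
  have hb2 : ‖∫ t in u..v, η' t * F t‖ ≤ M' * (8 / Real.sqrt r) := by
    have h1 : ‖∫ t in u..v, η' t * F t‖
        ≤ |∫ t in u..v, ‖η' t‖ * (8 / Real.sqrt r)| := by
      apply intervalIntegral.norm_integral_le_abs_of_norm_le
      · filter_upwards [MeasureTheory.ae_restrict_mem measurableSet_uIoc] with t ht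
        have ht' : t ∈ Icc u v := by
          rw [Set.uIoc_of_le huv] at ht; exact ⟨le_of_lt ht.1, ht.2⟩
        rw [norm_mul]
        exact mul_le_mul_of_nonneg_left (hFb t ht') (norm_nonneg _)
      · apply IntervalIntegrable.mul_const
        exact hη'int.norm
    rw [intervalIntegral.integral_mul_const] at h1
    have h2 : (∫ t in u..v, ‖η' t‖) * (8 / Real.sqrt r) ≤ M' * (8 / Real.sqrt r) :=
      mul_le_mul_of_nonneg_right hηint hB
    have h3 : 0 ≤ (∫ t in u..v, ‖η' t‖) :=
      intervalIntegral.integral_nonneg huv (fun x _ => norm_nonneg _)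
    rw [_root_.abs_of_nonneg (by positivity)] at h1
    linarith
  calc ‖η v * F v - ∫ t in u..v, η' t * F t‖
      ≤ ‖η v * F v‖ + ‖∫ t in u..v, η' t * F t‖ := norm_sub_le _ _
    _ ≤ 8 / Real.sqrt r + M' * (8 / Real.sqrt r) := add_le_add hb1 hb2
    _ = (1 + M') * (8 / Real.sqrt r) := by ring

/-- (Second-derivative van der Corput lemma with amplitude.)
If `φ : [a,b] → ℝ` is `C²` with `|φ″| ≥ ρ > 0` on `[a,b]` and `η : [a,b] → ℂ`
satisfies `|η| ≤ 1` and `∫ₐᵇ |η′| ≤ M`, then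
`|∫ₐᵇ η(t) e^{iμφ(t)} dt| ≤ C (1 + M) (μρ)^{−1/2}` for all `μ > 0`,
with `C` an absolute constant. -/
theorem vanDerCorput_second_order :
    ∃ C : ℝ, 0 < C ∧
      ∀ (a b ρ M : ℝ) (φ : ℝ → ℝ) (η : ℝ → ℂ),
        a < b → 0 < ρ → 0 ≤ M →
        ContDiffOn ℝ 2 φ (Set.Icc a b) →
        (∀ t ∈ Set.Icc a b, ρ ≤ |deriv (deriv φ) t|) →
        ContDiffOn ℝ 1 η (Set.Icc a b) →
        (∀ t ∈ Set.Icc a b, ‖η t‖ ≤ 1) →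
        (∫ t in a..b, ‖deriv η t‖) ≤ M →
        ∀ μ : ℝ, 0 < μ →
          ‖∫ t in a..b, η t * Complex.exp (Complex.I * (μ * φ t))‖
            ≤ C * (1 + M) * (μ * ρ) ^ (-(1/2) : ℝ) := by
  refine ⟨8, by norm_num, ?_⟩
  intro a b ρ M φ η hab hρ hM hφ hφ'' hη hη1 hη'M μ hμ
  set O : Set ℝ := Ioo a b with hO_def
  have hOopen : IsOpen O := isOpen_Ioo
  have hOsub : O ⊆ Icc a b := Ioo_subset_Icc_self
  have hr : 0 < μ * ρ := mul_pos hμ hρ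
  have hsq : 0 < Real.sqrt (μ * ρ) := Real.sqrt_pos.mpr hr
  -- φ facts
  have hφO : ContDiffOn ℝ 2 φ O := hφ.mono hOsub
  have hφd : ∀ t ∈ O, HasDerivAt φ (deriv φ t) t := by
    intro t ht
    exact ((hφO.differentiableOn (by norm_num) t ht).differentiableAt
      (hOopen.mem_nhds ht)).hasDerivAt
  have hφ1 : ContDiffOn ℝ 1 (deriv φ) O :=
    hφO.deriv_of_isOpen hOopen (by norm_num)
  have hφdd : ∀ t ∈ O, HasDerivAt (deriv φ) (deriv (deriv φ) t) t := by
    intro t ht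
    exact ((hφ1.differentiableOn (by norm_num) t ht).differentiableAt
      (hOopen.mem_nhds ht)).hasDerivAt
  have hf2c : ContinuousOn (deriv (deriv φ)) O :=
    hφ1.continuousOn_deriv_of_isOpen hOopen le_rfl
  -- η facts
  have hηO : ContDiffOn ℝ 1 η O := hη.mono hOsub
  have hηd : ∀ t ∈ O, HasDerivAt η (deriv η t) t := by
    intro t ht
    exact ((hηO.differentiableOn (by norm_num) t ht).differentiableAt
      (hOopen.mem_nhds ht)).hasDerivAt
  have hη'c : ContinuousOn (deriv η) O :=
    hηO.continuousOn_deriv_of_isOpen hOopen le_rfl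
  -- sign dichotomy for deriv (deriv φ) on O
  have hsignφ : (∀ t ∈ O, ρ ≤ deriv (deriv φ) t) ∨ (∀ t ∈ O, deriv (deriv φ) t ≤ -ρ) := by
    by_contra hcon
    push_neg at hcon
    obtain ⟨⟨s, hs, hs'⟩, ⟨t, ht, ht'⟩⟩ := hcon
    have hsneg : deriv (deriv φ) s ≤ -ρ := by
      have := hφ'' s (hOsub hs)
      rcases le_or_gt (deriv (deriv φ) s) 0 with h | h
      · rcases abs_cases (deriv (deriv φ) s) with ⟨he, _⟩ | ⟨he, _⟩ <;> linarith
      · rcases abs_cases (deriv (deriv φ) s) with ⟨he, _⟩ | ⟨he, _⟩ <;> linarith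
    have htpos : ρ ≤ deriv (deriv φ) t := by
      have := hφ'' t (hOsub ht)
      rcases le_or_gt (deriv (deriv φ) t) 0 with h | h
      · rcases abs_cases (deriv (deriv φ) t) with ⟨he, _⟩ | ⟨he, _⟩ <;> linarith
      · rcases abs_cases (deriv (deriv φ) t) with ⟨he, _⟩ | ⟨he, _⟩ <;> linarith
    rcases le_total s t with hst | hst
    · have hsubst : Icc s t ⊆ O := by
        intro x hx; exact ⟨lt_of_lt_of_le hs.1 hx.1, lt_of_le_of_lt hx.2 ht.2⟩
      obtain ⟨c, hc, hc0⟩ := intermediate_value_Icc hst (hf2c.mono hsubst)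
        (⟨by linarith, by linarith⟩ : (0:ℝ) ∈ Icc (deriv (deriv φ) s) (deriv (deriv φ) t))
      have := hφ'' c (hOsub (hsubst hc))
      rw [hc0] at this; simp at this; linarith
    · have hsubst : Icc t s ⊆ O := by
        intro x hx; exact ⟨lt_of_lt_of_le ht.1 hx.1, lt_of_le_of_lt hx.2 hs.2⟩
      obtain ⟨c, hc, hc0⟩ := intermediate_value_Icc' hst (hf2c.mono hsubst)
        (⟨by linarith, by linarith⟩ : (0:ℝ) ∈ Icc (deriv (deriv φ) s) (deriv (deriv φ) t))
      have := hφ'' c (hOsub (hsubst hc))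
      rw [hc0] at this; simp at this; linarith
  -- continuity of integrand on Icc a b
  have hEcIcc : ContinuousOn (fun t => Complex.exp (Complex.I * (μ * φ t))) (Icc a b) := by
    apply Complex.continuous_exp.comp_continuousOn
    apply continuous_const.continuousOn.mul
    exact (continuous_const.continuousOn.mul
      (Complex.continuous_ofReal.comp_continuousOn hφ.continuousOn))
  have hIcont : ContinuousOn (fun t => η t * Complex.exp (Complex.I * (μ * φ t))) (Icc a b) :=
    hη.continuousOn.mul hEcIcc
  have hIval : ∀ s t : ℝ, s ∈ Icc a b → t ∈ Icc a b →
      IntervalIntegrable (fun x => η x * Complex.exp (Complex.I * (μ * φ x))) volume s t := by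
    intro s t hs ht
    apply ContinuousOn.intervalIntegrable
    apply hIcont.mono
    intro x hx
    rcases le_total s t with h | h
    · rw [uIcc_of_le h] at hx; exact ⟨le_trans hs.1 hx.1, le_trans hx.2 ht.2⟩
    · rw [uIcc_of_ge h] at hx; exact ⟨le_trans ht.1 hx.1, le_trans hx.2 hs.2⟩
  have hnorm1 : ∀ x ∈ Icc a b, ‖η x * Complex.exp (Complex.I * (μ * φ x))‖ ≤ 1 := by
    intro x hx
    rw [norm_mul]
    have h2 : ‖Complex.exp (Complex.I * (μ * φ x))‖ = 1 := by
      simp [Complex.norm_exp]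
    rw [h2, mul_one]
    exact hη1 x hx
  -- rpow rewrite
  have hrpow : (μ * ρ) ^ (-(1/2) : ℝ) = (Real.sqrt (μ * ρ))⁻¹ := by
    rw [Real.rpow_neg hr.le, Real.sqrt_eq_rpow]
  -- derivWithin facts for the η' integral
  have hg₁c : ContinuousOn (derivWithin η (Icc a b)) (Icc a b) :=
    hη.continuousOn_derivWithin (uniqueDiffOn_Icc hab) le_rfl
  have hEqOn : ∀ t ∈ O, deriv η t = derivWithin η (Icc a b) t := by
    intro t ht
    exact (derivWithin_of_mem_nhds (Icc_mem_nhds ht.1 ht.2)).symm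
  have hg₁int : IntervalIntegrable (fun t => ‖derivWithin η (Icc a b) t‖) volume a b := by
    apply ContinuousOn.intervalIntegrable
    rw [uIcc_of_le hab.le]
    exact hg₁c.norm
  have hg₁M : (∫ t in a..b, ‖derivWithin η (Icc a b) t‖) ≤ M := by
    refine le_trans (le_of_eq ?_) hη'M
    apply intervalIntegral.integral_congr_ae
    have hbnull : {(b:ℝ)}ᶜ ∈ MeasureTheory.ae MeasureTheory.volume :=
      MeasureTheory.compl_mem_ae_iff.mpr (MeasureTheory.measure_singleton b)
    filter_upwards [hbnull] with t htb hmem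
    rw [Set.uIoc_of_le hab.le] at hmem
    have htO : t ∈ O := ⟨hmem.1, lt_of_le_of_ne hmem.2 htb⟩
    show ‖derivWithin η (Icc a b) t‖ = ‖deriv η t‖
    rw [hEqOn t htO]
  -- main ε-argument
  rw [hrpow]
  apply le_of_forall_pos_le_add
  intro ε hε
  set ε' : ℝ := (min ε (b - a)) / 2 with hε'_def
  have hε'pos : 0 < ε' := by
    apply div_pos _ (by norm_num)
    exact lt_min hε (by linarith)
  have hε'2 : 2 * ε' ≤ b - a := by
    have := min_le_right ε (b - a); simp only [hε'_def]; linarith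
  have hε'ε : 2 * ε' ≤ ε := by
    have := min_le_left ε (b - a); simp only [hε'_def]; linarith
  set u : ℝ := a + ε' with hu_def
  set v : ℝ := b - ε' with hv_def
  have huv : u ≤ v := by simp only [hu_def, hv_def]; linarith
  have huab : u ∈ Icc a b := ⟨by linarith, by linarith⟩
  have hvab : v ∈ Icc a b := ⟨by linarith, by linarith⟩
  have hsubO : Icc u v ⊆ O := by
    intro x hx
    exact ⟨by simp only [hu_def] at hx; linarith [hx.1], by simp only [hv_def] at hx; linarith [hx.2]⟩
  -- split
  have hsplit : (∫ t in a..b, η t * Complex.exp (Complex.I * (μ * φ t)))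
      = (∫ t in a..u, η t * Complex.exp (Complex.I * (μ * φ t)))
        + ((∫ t in u..v, η t * Complex.exp (Complex.I * (μ * φ t)))
          + ∫ t in v..b, η t * Complex.exp (Complex.I * (μ * φ t))) := by
    rw [intervalIntegral.integral_add_adjacent_intervals
      (hIval u v huab hvab) (hIval v b hvab (right_mem_Icc.mpr hab.le))]
    rw [intervalIntegral.integral_add_adjacent_intervals
      (hIval a u (left_mem_Icc.mpr hab.le) huab) (hIval u b huab (right_mem_Icc.mpr hab.le))]
  have hstrip1 : ‖∫ t in a..u, η t * Complex.exp (Complex.I * (μ * φ t))‖ ≤ ε' := by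
    have h1 : ‖∫ t in a..u, η t * Complex.exp (Complex.I * (μ * φ t))‖ ≤ 1 * |u - a| := by
      apply intervalIntegral.norm_integral_le_of_norm_le_const
      intro x hx
      apply hnorm1
      rw [Set.uIoc_of_le huab.1] at hx
      exact ⟨le_of_lt hx.1, le_trans hx.2 huab.2⟩
    simp only [hu_def] at h1 ⊢
    rw [show a + ε' - a = ε' by ring, _root_.abs_of_nonneg hε'pos.le] at h1
    linarith
  have hstrip2 : ‖∫ t in v..b, η t * Complex.exp (Complex.I * (μ * φ t))‖ ≤ ε' := by
    have h1 : ‖∫ t in v..b, η t * Complex.exp (Complex.I * (μ * φ t))‖ ≤ 1 * |b - v| := by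
      apply intervalIntegral.norm_integral_le_of_norm_le_const
      intro x hx
      apply hnorm1
      rw [Set.uIoc_of_le hvab.2] at hx
      exact ⟨le_trans hvab.1 (le_of_lt hx.1), hx.2⟩
    simp only [hv_def] at h1 ⊢
    rw [show b - (b - ε') = ε' by ring, _root_.abs_of_nonneg hε'pos.le] at h1
    linarith
  -- core estimate on [u, v]
  have hcore : ‖∫ t in u..v, η t * Complex.exp (Complex.I * (μ * φ t))‖
      ≤ (1 + M) * (8 / Real.sqrt (μ * ρ)) := by
    have hrw : (∫ t in u..v, η t * Complex.exp (Complex.I * (μ * φ t)))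
        = ∫ t in u..v, η t * Complex.exp (Complex.I * ((μ * φ t : ℝ) : ℂ)) := by
      apply intervalIntegral.integral_congr
      intro t _
      push_cast
      ring_nf
    rw [hrw]
    apply vdc_core hOopen huv hsubO hr
      (ψ := fun t => μ * φ t) (g := fun t => μ * deriv φ t)
      (g' := fun t => μ * deriv (deriv φ) t) (η' := deriv η)
      (fun t ht => (hφd t ht).const_mul μ)
      (fun t ht => (hφdd t ht).const_mul μ)
      (continuous_const.continuousOn.mul hf2c)
      ?_
      (fun t ht => hηd t ht)
      hη'c
      (fun t ht => hη1 t (hOsub (hsubO ht)))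
      ?_
    · rcases hsignφ with h | h
      · exact Or.inl (fun t ht => by
          have := h t (hsubO ht)
          exact mul_le_mul_of_nonneg_left this hμ.le)
      · exact Or.inr (fun t ht => by
          have h2 := mul_le_mul_of_nonneg_left (h t (hsubO ht)) hμ.le
          show μ * deriv (deriv φ) t ≤ -(μ * ρ)
          linarith)
    · -- ∫_u^v ‖deriv η‖ ≤ M
      have hstep1 : (∫ t in u..v, ‖deriv η t‖)
          = ∫ t in u..v, ‖derivWithin η (Icc a b) t‖ := by
        apply intervalIntegral.integral_congr
        intro t ht
        rw [uIcc_of_le huv] at ht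
        show ‖deriv η t‖ = ‖derivWithin η (Icc a b) t‖
        rw [hEqOn t (hsubO ht)]
      have hstep2 : (∫ t in u..v, ‖derivWithin η (Icc a b) t‖)
          ≤ ∫ t in a..b, ‖derivWithin η (Icc a b) t‖ := by
        apply intervalIntegral.integral_mono_interval huab.1 huv hvab.2
        · filter_upwards with t using norm_nonneg _
        · exact hg₁int
      rw [hstep1]
      exact le_trans hstep2 hg₁M
  -- combine
  rw [hsplit]
  have hfinal : ‖(∫ t in a..u, η t * Complex.exp (Complex.I * (μ * φ t)))
      + ((∫ t in u..v, η t * Complex.exp (Complex.I * (μ * φ t)))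
        + ∫ t in v..b, η t * Complex.exp (Complex.I * (μ * φ t)))‖
      ≤ ε' + ((1 + M) * (8 / Real.sqrt (μ * ρ)) + ε') := by
    refine le_trans (norm_add_le _ _) ?_
    apply add_le_add hstrip1
    exact le_trans (norm_add_le _ _) (add_le_add hcore hstrip2)
  refine le_trans hfinal ?_
  have h8 : (1 + M) * (8 / Real.sqrt (μ * ρ)) = 8 * (1 + M) * (Real.sqrt (μ * ρ))⁻¹ := by
    field_simp
  rw [h8]
  linarith
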